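/- arXiv:1510.00558 — 4 statements merged into one kernel-verified Lean document; each statement's English description precedes it below -/
import Mathlib

section
/- Let x : ℝ → ℝ^N and v : ℝ → ℝ^M solve the Lotka–Volterra system dx_i/dt = x_i(-r_i + Σ_k a_{ik} v_k), dv_j/dt = v_j(r̄_j - Σ_l b_{jl} x_l) with x_i(t) > 0, v_j(t) > 0. Suppose σ_l b_{lk} = ρ_k a_{kl} with ρ_k, σ_l ≠ 0, and there exist positive equilibrium values x̄ ∈ ℝ^N_{>0}, v̄ ∈ ℝ^M_{>0} with Σ_k a_{ik} v̄_k = r_i and Σ_l b_{jl} x̄_l = r̄_j. Then G(x,v) = Σ_k ρ_k (x_k - x̄_k log x_k) + Σ_l σ_l (v_l - v̄_l log v_l) is a first integral: dG(x(t),v(t))/dt = 0. -/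
open Real

/-- The function G(x,v) = Σ ρ_k (x_k - x̄_k log x_k) + Σ σ_l (v_l - v̄_l log v_l)
is a first integral of the Hamiltonian Lotka–Volterra system. -/
theorem stmt_9 (N M : ℕ) (hN : 1 ≤ N) (hM : 1 ≤ M)
    (r : Fin N → ℝ) (rbar : Fin M → ℝ)
    (a : Matrix (Fin N) (Fin M) ℝ) (b : Matrix (Fin M) (Fin N) ℝ)
    (ρ : Fin N → ℝ) (σ : Fin M → ℝ) (hρ : ∀ k, ρ k ≠ 0) (hσ : ∀ l, σ l ≠ 0)
    (hham : ∀ k l, σ l * b l k = ρ k * a k l)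
    (xbar : Fin N → ℝ) (vbar : Fin M → ℝ)
    (hxbar : ∀ k, 0 < xbar k) (hvbar : ∀ l, 0 < vbar l)
    (heq1 : ∀ i, ∑ k, a i k * vbar k = r i)
    (heq2 : ∀ j, ∑ l, b j l * xbar l = rbar j)
    (x : ℝ → Fin N → ℝ) (v : ℝ → Fin M → ℝ)
    (hxpos : ∀ t i, 0 < x t i) (hvpos : ∀ t j, 0 < v t j)
    (hx : ∀ t i, HasDerivAt (fun s => x s i)
      (x t i * (-r i + ∑ k, a i k * v t k)) t)
    (hv : ∀ t j, HasDerivAt (fun s => v s j)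
      (v t j * (rbar j - ∑ l, b j l * x t l)) t) :
    ∀ t, HasDerivAt
      (fun s => (∑ k, ρ k * (x s k - xbar k * Real.log (x s k))) +
        ∑ l, σ l * (v s l - vbar l * Real.log (v s l))) 0 t := by
  intro t
  have hD1 : ∀ k : Fin N, HasDerivAt (fun s => ρ k * (x s k - xbar k * Real.log (x s k)))
      (ρ k * ((x t k - xbar k) * (-r k + ∑ l, a k l * v t l))) t := by
    intro k
    have hxk := hx t k
    have hlog : HasDerivAt (fun s => Real.log (x s k))
        ((x t k * (-r k + ∑ l, a k l * v t l)) / (x t k)) t :=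
      hxk.log (hxpos t k).ne'
    have h := (hxk.fun_sub (hlog.const_mul (xbar k))).const_mul (ρ k)
    refine h.congr_deriv ?_
    rw [mul_div_cancel_left₀ _ (hxpos t k).ne']
    ring
  have hD2 : ∀ l : Fin M, HasDerivAt (fun s => σ l * (v s l - vbar l * Real.log (v s l)))
      (σ l * ((v t l - vbar l) * (rbar l - ∑ k, b l k * x t k))) t := by
    intro l
    have hvl := hv t l
    have hlog : HasDerivAt (fun s => Real.log (v s l))
        ((v t l * (rbar l - ∑ k, b l k * x t k)) / (v t l)) t :=
      hvl.log (hvpos t l).ne'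
    have h := (hvl.fun_sub (hlog.const_mul (vbar l))).const_mul (σ l)
    refine h.congr_deriv ?_
    rw [mul_div_cancel_left₀ _ (hvpos t l).ne']
    ring
  have hS1 : HasDerivAt (fun s => ∑ k, ρ k * (x s k - xbar k * Real.log (x s k)))
      (∑ k, ρ k * ((x t k - xbar k) * (-r k + ∑ l, a k l * v t l))) t :=
    HasDerivAt.fun_sum (fun k _ => hD1 k)
  have hS2 : HasDerivAt (fun s => ∑ l, σ l * (v s l - vbar l * Real.log (v s l)))
      (∑ l, σ l * ((v t l - vbar l) * (rbar l - ∑ k, b l k * x t k))) t :=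
    HasDerivAt.fun_sum (fun l _ => hD2 l)
  have key : (∑ k, ρ k * ((x t k - xbar k) * (-r k + ∑ l, a k l * v t l))) +
      (∑ l, σ l * ((v t l - vbar l) * (rbar l - ∑ k, b l k * x t k))) = 0 := by
    have e1 : ∀ k : Fin N, ρ k * ((x t k - xbar k) * (-r k + ∑ l, a k l * v t l)) =
        ∑ l, ρ k * a k l * (x t k - xbar k) * (v t l - vbar l) := by
      intro k
      have hs : (-r k + ∑ l, a k l * v t l) = ∑ l, a k l * (v t l - vbar l) := by
        rw [← heq1 k, neg_add_eq_sub, ← Finset.sum_sub_distrib]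
        exact Finset.sum_congr rfl (fun l _ => by ring)
      rw [hs, Finset.mul_sum, Finset.mul_sum]
      exact Finset.sum_congr rfl (fun l _ => by ring)
    have e2 : ∀ l : Fin M, σ l * ((v t l - vbar l) * (rbar l - ∑ k, b l k * x t k)) =
        ∑ k, -(ρ k * a k l * (x t k - xbar k) * (v t l - vbar l)) := by
      intro l
      have hs : (rbar l - ∑ k, b l k * x t k) = ∑ k, -(b l k * (x t k - xbar k)) := by
        rw [← heq2 l, ← Finset.sum_sub_distrib]
        exact Finset.sum_congr rfl (fun k _ => by ring)
      rw [hs, Finset.mul_sum, Finset.mul_sum]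
      refine Finset.sum_congr rfl (fun k _ => ?_)
      linear_combination (-(x t k - xbar k) * (v t l - vbar l)) * hham k l
    rw [Finset.sum_congr rfl (fun k _ => e1 k), Finset.sum_congr rfl (fun l _ => e2 l)]
    rw [show (∑ l : Fin M, ∑ k : Fin N, -(ρ k * a k l * (x t k - xbar k) * (v t l - vbar l)))
        = ∑ k : Fin N, ∑ l : Fin M, -(ρ k * a k l * (x t k - xbar k) * (v t l - vbar l))
        from Finset.sum_comm, ← Finset.sum_add_distrib]
    refine Finset.sum_eq_zero (fun k _ => ?_)
    rw [← Finset.sum_add_distrib]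
    exact Finset.sum_eq_zero (fun l _ => by ring)
  have := hS1.add hS2
  rwa [key] at this
end

section
/- Star-system change of variables: let q : ℝ → ℝ be twice differentiable with dq/dt(t) + μ > 0 for all t, and define v(t) = dq/dt(t) + μ and x_i(t) = C_i exp(a_i q(t)) for constants C_i > 0, a_i, μ > 0, with r_i = a_i μ. If q satisfies d²q/dt² = (dq/dt + μ)(r̄ - Σ_j b_j C_j exp(a_j q)), then (x, v) solves dx_i/dt = x_i(-r_i + a_i v) and dv/dt = v(r̄ - Σ_l b_l x_l). -/
open Real

/-- Star-system change of variables: if q satisfies the second-order equation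
q'' = (q' + μ)(r̄ - Σ b_j C_j exp(a_j q)), then x_i = C_i exp(a_i q),
v = q' + μ solve the star Lotka–Volterra system with r_i = a_i μ. -/
theorem stmt_10 (N : ℕ) (hN : 1 ≤ N) (a b C : Fin N → ℝ) (rbar μ : ℝ)
    (hμ : 0 < μ) (hC : ∀ i, 0 < C i)
    (q q' : ℝ → ℝ)
    (hq : ∀ t, HasDerivAt q (q' t) t)
    (hpos : ∀ t, 0 < q' t + μ)
    (hq' : ∀ t, HasDerivAt q'
      ((q' t + μ) * (rbar - ∑ j, b j * C j * Real.exp (a j * q t))) t) :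
    (∀ i t, HasDerivAt (fun s => C i * Real.exp (a i * q s))
        ((C i * Real.exp (a i * q t)) * (-(a i * μ) + a i * (q' t + μ))) t) ∧
    (∀ t, HasDerivAt (fun s => q' s + μ)
        ((q' t + μ) * (rbar - ∑ l, b l * (C l * Real.exp (a l * q t)))) t) := by
  constructor
  · intro i t
    have h : HasDerivAt (fun s => C i * Real.exp (a i * q s))
        (C i * (Real.exp (a i * q t) * (a i * q' t))) t :=
      (((hq t).const_mul (a i)).exp).const_mul (C i)
    convert h using 1
    ring
  · intro t
    have h := (hq' t).add_const μ
    convert h using 1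
    congr 1
    congr 1
    simp only [mul_assoc]
end

section
/- Let Φ(q) = Σ_{k=1}^N c_k exp(w_k · q) - r̄ · q where c_k > 0, w_k ∈ ℝ^M, r̄ ∈ ℝ^M. If there exists z ∈ ℝ^N with z_k > 0 such that r̄ = Σ_k z_k w_k and the vectors {w_k} span ℝ^M, then Φ(q) → +∞ as |q| → ∞. -/
open Real Filter RealInnerProductSpace

lemma stmt_16_key (c z t : ℝ) (hc : 0 < c) (hz : 0 < z) :
    z * |t| - 4 * z ^ 2 / c ≤ c * Real.exp t - z * t := by
  have hC : 0 ≤ 4 * z ^ 2 / c := by positivity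
  rcases le_or_gt t 0 with ht | ht
  · rw [abs_of_nonpos ht]
    nlinarith [Real.exp_pos t, hc.le]
  · rw [abs_of_pos ht]
    have h1 : 1 + t / 2 ≤ Real.exp (t / 2) := by
      have := Real.add_one_le_exp (t / 2); linarith
    have h2 : Real.exp (t / 2) ^ 2 = Real.exp t := by
      rw [sq, ← Real.exp_add]; congr 1; ring
    have h3 : (1 + t / 2) ^ 2 ≤ Real.exp t := by
      rw [← h2]
      exact pow_le_pow_left₀ (by linarith) h1 2
    have key : 2 * z * t * c ≤ c ^ 2 * Real.exp t + 4 * z ^ 2 := by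
      nlinarith [mul_le_mul_of_nonneg_left h3 (sq_nonneg c),
        sq_nonneg (c * t / 2 - 2 * z), hc, ht.le]
    have : 2 * z * t - c * Real.exp t ≤ 4 * z ^ 2 / c := by
      rw [le_div_iff₀ hc]; nlinarith [key]
    linarith

/-- If r̄ is a strictly positive combination of the exponents w_k and the w_k
span ℝ^M, then Φ(q) = Σ c_k exp(⟪w_k, q⟫) - ⟪r̄, q⟫ is coercive. -/
theorem stmt_16 (N M : ℕ) (hN : 1 ≤ N) (hM : 1 ≤ M)
    (c : Fin N → ℝ) (hc : ∀ k, 0 < c k)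
    (w : Fin N → EuclideanSpace ℝ (Fin M)) (rbar : EuclideanSpace ℝ (Fin M))
    (z : Fin N → ℝ) (hz : ∀ k, 0 < z k) (hr : rbar = ∑ k, z k • w k)
    (hspan : Submodule.span ℝ (Set.range w) = ⊤) :
    ∀ R : ℝ, ∃ S : ℝ, ∀ q : EuclideanSpace ℝ (Fin M), S < ‖q‖ →
      R < (∑ k, c k * Real.exp ((inner ℝ (w k) q : ℝ))) - (inner ℝ rbar q : ℝ) := by
  classical
  intro R
  set f : EuclideanSpace ℝ (Fin M) → ℝ :=
    fun q => ∑ k, z k * |(inner ℝ (w k) q : ℝ)| with hf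
  have hcont : Continuous f := by
    apply continuous_finset_sum
    intro k _
    exact continuous_const.mul ((continuous_const.inner continuous_id).abs)
  haveI : Nonempty (Fin M) := ⟨⟨0, hM⟩⟩
  have hsne : (Metric.sphere (0 : EuclideanSpace ℝ (Fin M)) 1).Nonempty :=
    NormedSpace.sphere_nonempty.mpr zero_le_one
  obtain ⟨x0, hx0, hmin⟩ :=
    (isCompact_sphere (0 : EuclideanSpace ℝ (Fin M)) 1).exists_isMinOn hsne
      hcont.continuousOn
  set ε := f x0 with hε
  have hx0norm : ‖x0‖ = 1 := mem_sphere_zero_iff_norm.mp hx0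
  have hεnonneg : 0 ≤ ε := by
    apply Finset.sum_nonneg
    intro k _
    exact mul_nonneg (hz k).le (abs_nonneg _)
  have hεpos : 0 < ε := by
    rcases hεnonneg.lt_or_eq with h | h
    · exact h
    · exfalso
      have hall : ∀ k ∈ Finset.univ, z k * |(inner ℝ (w k) x0 : ℝ)| = 0 := by
        apply (Finset.sum_eq_zero_iff_of_nonneg
          (fun k _ => mul_nonneg (hz k).le (abs_nonneg _))).mp h.symm
      have horth : ∀ k, (inner ℝ (w k) x0 : ℝ) = 0 := by
        intro k
        have := hall k (Finset.mem_univ k)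
        have h2 : |(inner ℝ (w k) x0 : ℝ)| = 0 := by
          rcases mul_eq_zero.mp this with h' | h'
          · exact absurd h' (hz k).ne'
          · exact h'
        exact abs_eq_zero.mp h2
      have hzero : ∀ u ∈ Submodule.span ℝ (Set.range w), (inner ℝ u x0 : ℝ) = 0 := by
        intro u hu
        induction hu using Submodule.span_induction with
        | mem x hx => obtain ⟨k, rfl⟩ := hx; exact horth k
        | zero => simp
        | add x y _ _ hx hy => rw [inner_add_left, hx, hy]; ring
        | smul a x _ hx => rw [real_inner_smul_left, hx]; ring
      have hx00 : (inner ℝ x0 x0 : ℝ) = 0 :=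
        hzero x0 (by rw [hspan]; trivial)
      have : x0 = 0 := inner_self_eq_zero.mp hx00
      rw [this] at hx0norm
      simp at hx0norm
  have hlow : ∀ q : EuclideanSpace ℝ (Fin M), ε * ‖q‖ ≤ f q := by
    intro q
    rcases eq_or_ne q 0 with rfl | hq
    · simp [hf]
    · have hqn : 0 < ‖q‖ := norm_pos_iff.mpr hq
      have hmem : (‖q‖⁻¹ • q) ∈ Metric.sphere (0 : EuclideanSpace ℝ (Fin M)) 1 := by
        simp [norm_smul, abs_of_pos hqn, inv_mul_cancel₀ hqn.ne']
      have h1 : ε ≤ f (‖q‖⁻¹ • q) := hmin hmem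
      have h2 : f (‖q‖⁻¹ • q) = ‖q‖⁻¹ * f q := by
        rw [hf]
        simp only [real_inner_smul_right]
        rw [Finset.mul_sum]
        refine Finset.sum_congr rfl fun k _ => ?_
        rw [abs_mul, abs_of_nonneg (inv_nonneg.mpr hqn.le)]; ring
      rw [h2] at h1
      calc ε * ‖q‖ ≤ (‖q‖⁻¹ * f q) * ‖q‖ := by
            exact mul_le_mul_of_nonneg_right h1 hqn.le
        _ = f q := by field_simp
  set C := ∑ k, 4 * (z k) ^ 2 / c k with hC
  refine ⟨(R + C) / ε, fun q hq => ?_⟩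
  have hinner : (inner ℝ rbar q : ℝ) = ∑ k, z k * (inner ℝ (w k) q : ℝ) := by
    rw [hr, sum_inner]
    exact Finset.sum_congr rfl fun k _ => real_inner_smul_left _ _ _
  have hsum : f q - C ≤
      (∑ k, c k * Real.exp ((inner ℝ (w k) q : ℝ))) - (inner ℝ rbar q : ℝ) := by
    rw [hinner, hf, hC, ← Finset.sum_sub_distrib, ← Finset.sum_sub_distrib]
    exact Finset.sum_le_sum fun k _ =>
      stmt_16_key (c k) (z k) _ (hc k) (hz k)
  have hbig : R + C < ε * ‖q‖ := by
    have := (div_lt_iff₀ hεpos).mp hq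
    linarith [this]
  have := hlow q
  linarith
end

section
/- Conversely: let Φ(q) = Σ_{k=1}^N c_k exp(w_k·q) - r̄·q with c_k > 0. If Φ(q) → +∞ as |q| → ∞, then r̄ lies in the interior of the convex cone generated by {w_1, …, w_N}; in particular there exist z_k > 0 with r̄ = Σ_k z_k w_k, and {w_k} spans ℝ^M. -/
open Real Filter RealInnerProductSpace Finset


lemma quantStar {N M : ℕ} (hN : 1 ≤ N) (hM : 1 ≤ M)
    (w : Fin N → EuclideanSpace ℝ (Fin M)) (y : EuclideanSpace ℝ (Fin M))
    (H : ∀ q : EuclideanSpace ℝ (Fin M), q ≠ 0 → (∀ k, (inner ℝ (w k) q : ℝ) ≤ 0) →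
      (inner ℝ y q : ℝ) < 0) :
    ∃ ε : ℝ, 0 < ε ∧ ∀ q : EuclideanSpace ℝ (Fin M),
      (inner ℝ y q : ℝ) ≤ -(ε * ‖q‖) ∨ ∃ k, ε * ‖q‖ ≤ (inner ℝ (w k) q : ℝ) := by
  haveI : Nonempty (Fin M) := ⟨⟨0, hM⟩⟩
  haveI : Nonempty (Fin N) := ⟨⟨0, hN⟩⟩
  set G : EuclideanSpace ℝ (Fin M) → ℝ :=
    fun u => max (-(inner ℝ y u : ℝ)) (∑ k, max ((inner ℝ (w k) u : ℝ)) 0) with hG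
  have hGcont : Continuous G := by
    apply Continuous.max
    · exact (continuous_const.inner continuous_id).neg
    · exact continuous_finset_sum _ fun k _ =>
        ((continuous_const.inner continuous_id)).max continuous_const
  have hsph : (Metric.sphere (0 : EuclideanSpace ℝ (Fin M)) 1).Nonempty :=
    NormedSpace.sphere_nonempty.mpr zero_le_one
  obtain ⟨u₀, hu₀mem, hu₀min⟩ :=
    (isCompact_sphere (0 : EuclideanSpace ℝ (Fin M)) 1).exists_isMinOn hsph hGcont.continuousOn
  have hε₀ : 0 < G u₀ := by
    have hu₀n : ‖u₀‖ = 1 := by simpa [mem_sphere_iff_norm] using hu₀mem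
    have hu₀ne : u₀ ≠ 0 := by intro h; rw [h] at hu₀n; simp at hu₀n
    rcases lt_or_ge 0 (∑ k, max ((inner ℝ (w k) u₀ : ℝ)) 0) with h | h
    · exact lt_of_lt_of_le h (le_max_right _ _)
    · have hnn : ∀ j ∈ (univ : Finset (Fin N)), (0:ℝ) ≤ max ((inner ℝ (w j) u₀ : ℝ)) 0 :=
        fun j _ => le_max_right _ _
      have hz : ∑ k, max ((inner ℝ (w k) u₀ : ℝ)) 0 = 0 :=
        le_antisymm h (Finset.sum_nonneg hnn)
      have hall : ∀ k, (inner ℝ (w k) u₀ : ℝ) ≤ 0 := by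
        intro k
        have := (Finset.sum_eq_zero_iff_of_nonneg hnn).mp hz k (mem_univ k)
        calc (inner ℝ (w k) u₀ : ℝ) ≤ max ((inner ℝ (w k) u₀ : ℝ)) 0 := le_max_left _ _
          _ = 0 := this
      have := H u₀ hu₀ne hall
      exact lt_of_lt_of_le (by linarith) (le_max_left _ _)
  set ε := G u₀ / N with hεdef
  have hεpos : 0 < ε := by positivity
  have hεle : ε ≤ G u₀ := by
    rw [hεdef]
    apply div_le_self hε₀.le
    exact_mod_cast hN
  refine ⟨ε, hεpos, ?_⟩
  intro q
  rcases eq_or_ne q 0 with rfl | hq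
  · left; simp
  · have hqn : 0 < ‖q‖ := norm_pos_iff.mpr hq
    set u : EuclideanSpace ℝ (Fin M) := ‖q‖⁻¹ • q with hu
    have humem : u ∈ Metric.sphere (0 : EuclideanSpace ℝ (Fin M)) 1 := by
      simp [hu, mem_sphere_iff_norm, norm_smul, abs_of_pos (inv_pos.mpr hqn),
        inv_mul_cancel₀ hqn.ne']
    have hscale : ∀ x : EuclideanSpace ℝ (Fin M), (inner ℝ x u : ℝ) = ‖q‖⁻¹ * inner ℝ x q := by
      intro x; rw [hu, real_inner_smul_right]
    have hGu : G u₀ ≤ max (-(inner ℝ y u : ℝ)) (∑ k, max ((inner ℝ (w k) u : ℝ)) 0) :=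
      hu₀min humem
    rcases le_max_iff.mp hGu with hcase | hcase
    · left
      rw [hscale] at hcase
      have h1 : ‖q‖⁻¹ * (inner ℝ y q : ℝ) ≤ -ε := by linarith
      have h2 : ‖q‖ * (‖q‖⁻¹ * (inner ℝ y q : ℝ)) ≤ ‖q‖ * (-ε) :=
        mul_le_mul_of_nonneg_left h1 hqn.le
      have h3 : ‖q‖ * (‖q‖⁻¹ * (inner ℝ y q : ℝ)) = (inner ℝ y q : ℝ) := by field_simp
      rw [h3] at h2
      linarith
    · right
      have hex : ∃ k, ε ≤ max ((inner ℝ (w k) u : ℝ)) 0 := by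
        by_contra hcon
        push_neg at hcon
        have : ∑ k, max ((inner ℝ (w k) u : ℝ)) 0 < ∑ _k : Fin N, ε :=
          Finset.sum_lt_sum_of_nonempty univ_nonempty fun k _ => hcon k
        rw [Finset.sum_const, Finset.card_univ, Fintype.card_fin, nsmul_eq_mul, hεdef,
          mul_div_cancel₀ _ (by exact_mod_cast Nat.one_le_iff_ne_zero.mp hN : (N:ℝ) ≠ 0)] at this
        linarith
      obtain ⟨k, hk⟩ := hex
      have hk' : ε ≤ (inner ℝ (w k) u : ℝ) := by
        rcases le_max_iff.mp hk with h | h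
        · exact h
        · linarith
      refine ⟨k, ?_⟩
      rw [hscale] at hk'
      calc ε * ‖q‖ ≤ (‖q‖⁻¹ * (inner ℝ (w k) q : ℝ)) * ‖q‖ := by nlinarith
        _ = (inner ℝ (w k) q : ℝ) := by field_simp

set_option maxHeartbeats 1000000 in
lemma posRep {N M : ℕ} (hN : 1 ≤ N) (hM : 1 ≤ M)
    (c : Fin N → ℝ) (hc : ∀ k, 0 < c k)
    (w : Fin N → EuclideanSpace ℝ (Fin M)) (y : EuclideanSpace ℝ (Fin M))
    (H : ∀ q : EuclideanSpace ℝ (Fin M), q ≠ 0 → (∀ k, (inner ℝ (w k) q : ℝ) ≤ 0) →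
      (inner ℝ y q : ℝ) < 0) :
    ∃ z : Fin N → ℝ, (∀ k, 0 < z k) ∧ y = ∑ k, z k • w k := by
  haveI : Nonempty (Fin N) := ⟨⟨0, hN⟩⟩
  obtain ⟨ε, hεpos, hquant⟩ := quantStar hN hM w y H
  set Φ : EuclideanSpace ℝ (Fin M) → ℝ :=
    fun q => (∑ k, c k * Real.exp ((inner ℝ (w k) q : ℝ))) - (inner ℝ y q : ℝ) with hΦ
  have hΦcont : Continuous Φ := by
    apply Continuous.sub
    · exact continuous_finset_sum _ fun k _ =>
        continuous_const.mul (Real.continuous_exp.comp (continuous_const.inner continuous_id))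
    · exact continuous_const.inner continuous_id
  -- minimum of the coefficients
  obtain ⟨k₀, -, hk₀⟩ := Finset.exists_min_image (univ : Finset (Fin N)) c univ_nonempty
  have hcm : 0 < c k₀ := hc k₀
  have hcmle : ∀ k, c k₀ ≤ c k := fun k => hk₀ k (mem_univ k)
  have hB : 0 < Φ 0 := by
    have : Φ 0 = ∑ k, c k := by simp [hΦ]
    rw [this]
    exact Finset.sum_pos (fun k _ => hc k) univ_nonempty
  set B := Φ 0 with hBdef
  set Y := ‖y‖ with hYdef
  have hY : 0 ≤ Y := norm_nonneg _
  set A := c k₀ * ε ^ 2 / 2 with hAdef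
  have hA : 0 < A := by positivity
  set S := max 1 (max ((B + 1) / ε) ((Y + B + 1) / A)) with hSdef
  have hS1 : (1:ℝ) ≤ S := le_max_left _ _
  -- growth estimate
  have hgrow : ∀ q : EuclideanSpace ℝ (Fin M), S < ‖q‖ → B < Φ q := by
    intro q hSq
    set r := ‖q‖ with hrdef
    have hr1 : 1 < r := lt_of_le_of_lt hS1 hSq
    have hexpnn : ∀ k ∈ (univ : Finset (Fin N)), 0 ≤ c k * Real.exp ((inner ℝ (w k) q : ℝ)) :=
      fun k _ => mul_nonneg (hc k).le (Real.exp_pos _).le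
    rcases hquant q with hle | ⟨k, hk⟩
    · have h1 : (B + 1) / ε < r := lt_of_le_of_lt (le_trans (le_max_left _ _) (le_max_right _ _)) hSq
      have h2 : B + 1 < r * ε := (div_lt_iff₀ hεpos).mp h1
      have h3 : ε * r ≤ Φ q := by
        have h4 : 0 ≤ ∑ k, c k * Real.exp ((inner ℝ (w k) q : ℝ)) := Finset.sum_nonneg hexpnn
        have : (inner ℝ y q : ℝ) ≤ -(ε * r) := hle
        simp only [hΦ]
        linarith
      linarith [h3, h2]
    · have h1 : (Y + B + 1) / A < r := lt_of_le_of_lt (le_trans (le_max_right _ _) (le_max_right _ _)) hSq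
      have h2 : Y + B + 1 < r * A := (div_lt_iff₀ hA).mp h1
      have hterm : c k * Real.exp ((inner ℝ (w k) q : ℝ)) ≤
          ∑ j, c j * Real.exp ((inner ℝ (w j) q : ℝ)) :=
        Finset.single_le_sum hexpnn (mem_univ k)
      have hexp1 : Real.exp (ε * r) ≤ Real.exp ((inner ℝ (w k) q : ℝ)) := Real.exp_le_exp.mpr hk
      have hexp2 : 1 + ε * r + (ε * r) ^ 2 / 2 ≤ Real.exp (ε * r) :=
        Real.quadratic_le_exp_of_nonneg (by positivity)
      have hinner : (inner ℝ y q : ℝ) ≤ Y * r := real_inner_le_norm y q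
      have hmono : c k₀ * Real.exp (ε * r) ≤ c k * Real.exp ((inner ℝ (w k) q : ℝ)) :=
        mul_le_mul (hcmle k) hexp1 (Real.exp_pos _).le (hc k).le
      have hΦq : c k₀ * Real.exp (ε * r) - Y * r ≤ Φ q := by
        simp only [hΦ]
        linarith
      have hquad : c k₀ * (1 + ε * r + (ε * r) ^ 2 / 2) ≤ c k₀ * Real.exp (ε * r) :=
        mul_le_mul_of_nonneg_left hexp2 hcm.le
      have hr0 : (0:ℝ) < r := by linarith
      have hP1 : (Y + B + 1) * r < A * (r * r) := by
        have := mul_lt_mul_of_pos_right h2 hr0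
        nlinarith [this]
      have hAr : A * (r * r) = c k₀ * ((ε * r) ^ 2 / 2) := by rw [hAdef]; ring
      have hcmεr : 0 ≤ c k₀ * (ε * r) := by positivity
      have hBr : B + 1 ≤ (B + 1) * r := le_mul_of_one_le_right (by linarith) (by linarith)
      nlinarith [hΦq, hquad, hP1, hAr, hcmεr, hcm.le, hBr]
  -- existence of a global minimizer
  have h0mem : (0 : EuclideanSpace ℝ (Fin M)) ∈ Metric.closedBall (0 : EuclideanSpace ℝ (Fin M)) (S + 1) :=
    Metric.mem_closedBall_self (by linarith)
  obtain ⟨q₀, hq₀mem, hq₀min⟩ :=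
    (isCompact_closedBall (0 : EuclideanSpace ℝ (Fin M)) (S + 1)).exists_isMinOn
      ⟨0, h0mem⟩ hΦcont.continuousOn
  have hglob : ∀ q, Φ q₀ ≤ Φ q := by
    intro q
    rcases le_or_gt ‖q‖ (S + 1) with h | h
    · exact hq₀min (by simpa [Metric.mem_closedBall, dist_zero_right] using h)
    · have h1 : S < ‖q‖ := by linarith
      have h2 : Φ q₀ ≤ Φ 0 := hq₀min h0mem
      have := hgrow q h1
      linarith
  -- gradient condition at the minimizer
  set z : Fin N → ℝ := fun k => c k * Real.exp ((inner ℝ (w k) q₀ : ℝ)) with hzdef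
  have hzpos : ∀ k, 0 < z k := fun k => mul_pos (hc k) (Real.exp_pos _)
  have key : ∀ v : EuclideanSpace ℝ (Fin M),
      ∑ k, z k * (inner ℝ (w k) v : ℝ) = (inner ℝ y v : ℝ) := by
    intro v
    set g : ℝ → ℝ := fun t =>
      (∑ k, c k * Real.exp ((inner ℝ (w k) q₀ : ℝ) + t * (inner ℝ (w k) v : ℝ)))
        - ((inner ℝ y q₀ : ℝ) + t * (inner ℝ y v : ℝ)) with hg
    have hgΦ : ∀ t, g t = Φ (q₀ + t • v) := by
      intro t
      simp only [hg, hΦ, inner_add_right, real_inner_smul_right]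
    have hlocmin : IsLocalMin g 0 := by
      have : ∀ t, g 0 ≤ g t := by
        intro t
        rw [hgΦ, hgΦ]
        simp only [zero_smul, add_zero]
        exact hglob _
      exact Filter.Eventually.of_forall this
    have hD : HasDerivAt g
        ((∑ k, c k * (Real.exp ((inner ℝ (w k) q₀ : ℝ)) * (inner ℝ (w k) v : ℝ)))
          - (inner ℝ y v : ℝ)) 0 := by
      apply HasDerivAt.sub
      · apply HasDerivAt.fun_sum
        intro k _
        have h1 : HasDerivAt (fun t : ℝ => (inner ℝ (w k) q₀ : ℝ) + t * (inner ℝ (w k) v : ℝ))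
            ((inner ℝ (w k) v : ℝ)) 0 := by
          simpa using ((hasDerivAt_id (0:ℝ)).mul_const ((inner ℝ (w k) v : ℝ))).const_add
            ((inner ℝ (w k) q₀ : ℝ))
        simpa using (h1.exp).const_mul (c k)
      · simpa using ((hasDerivAt_id (0:ℝ)).mul_const ((inner ℝ y v : ℝ))).const_add
          ((inner ℝ y q₀ : ℝ))
    have hzero := hlocmin.hasDerivAt_eq_zero hD
    have hsum : ∑ k, z k * (inner ℝ (w k) v : ℝ)
        = ∑ k, c k * (Real.exp ((inner ℝ (w k) q₀ : ℝ)) * (inner ℝ (w k) v : ℝ)) :=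
      Finset.sum_congr rfl fun k _ => by rw [hzdef]; ring
    rw [hsum]
    linarith [hzero]
  refine ⟨z, hzpos, ?_⟩
  have hv : ∀ v : EuclideanSpace ℝ (Fin M),
      (inner ℝ ((∑ k, z k • w k) - y) v : ℝ) = 0 := by
    intro v
    rw [inner_sub_left, sum_inner]
    simp only [real_inner_smul_left]
    rw [key v]
    ring
  have h0 : (∑ k, z k • w k) - y = 0 := by
    have := hv ((∑ k, z k • w k) - y)
    exact inner_self_eq_zero.mp this
  exact (sub_eq_zero.mp h0).symm

set_option maxHeartbeats 1000000 in
/-- Conversely, coercivity of Φ(q) = Σ c_k exp(⟪w_k, q⟫) - ⟪r̄, q⟫ forces r̄ to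
lie in the interior of the convex cone generated by the w_k; in particular r̄ is
a strictly positive combination of the w_k, and the w_k span ℝ^M. -/
theorem stmt_17 (N M : ℕ) (hN : 1 ≤ N) (hM : 1 ≤ M)
    (c : Fin N → ℝ) (hc : ∀ k, 0 < c k)
    (w : Fin N → EuclideanSpace ℝ (Fin M)) (rbar : EuclideanSpace ℝ (Fin M))
    (hcoer : ∀ R : ℝ, ∃ S : ℝ, ∀ q : EuclideanSpace ℝ (Fin M), S < ‖q‖ →
      R < (∑ k, c k * Real.exp ((inner ℝ (w k) q : ℝ))) - (inner ℝ rbar q : ℝ)) :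
    rbar ∈ interior {y : EuclideanSpace ℝ (Fin M) |
        ∃ z : Fin N → ℝ, (∀ k, 0 ≤ z k) ∧ y = ∑ k, z k • w k} ∧
    (∃ z : Fin N → ℝ, (∀ k, 0 < z k) ∧ rbar = ∑ k, z k • w k) ∧
    Submodule.span ℝ (Set.range w) = ⊤ := by
  -- Step 1: the qualitative separation property for rbar
  have hstar : ∀ u : EuclideanSpace ℝ (Fin M), u ≠ 0 →
      (∀ k, (inner ℝ (w k) u : ℝ) ≤ 0) → (inner ℝ rbar u : ℝ) < 0 := by
    intro u hu hw
    obtain ⟨S, hS⟩ := hcoer (∑ k, c k)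
    have hun : 0 < ‖u‖ := norm_pos_iff.mpr hu
    set t : ℝ := (max S 0 + 1) / ‖u‖ with htdef
    have ht : 0 < t := by positivity
    have hq : ‖t • u‖ = max S 0 + 1 := by
      rw [norm_smul, Real.norm_eq_abs, abs_of_pos ht, htdef]
      field_simp
    have hSq : S < ‖t • u‖ := by
      rw [hq]
      have := le_max_left S (0:ℝ)
      linarith
    have h1 := hS (t • u) hSq
    have h2 : ∀ k ∈ (univ : Finset (Fin N)),
        c k * Real.exp ((inner ℝ (w k) (t • u) : ℝ)) ≤ c k := by
      intro k _
      have : (inner ℝ (w k) (t • u) : ℝ) = t * inner ℝ (w k) u := real_inner_smul_right _ _ _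
      rw [this]
      have hle : t * (inner ℝ (w k) u : ℝ) ≤ 0 := mul_nonpos_of_nonneg_of_nonpos ht.le (hw k)
      calc c k * Real.exp (t * (inner ℝ (w k) u : ℝ)) ≤ c k * 1 :=
            mul_le_mul_of_nonneg_left (Real.exp_le_one_iff.mpr hle) (hc k).le
        _ = c k := mul_one _
    have h3 : ∑ k, c k * Real.exp ((inner ℝ (w k) (t • u) : ℝ)) ≤ ∑ k, c k :=
      Finset.sum_le_sum h2
    have h4 : (inner ℝ rbar (t • u) : ℝ) = t * inner ℝ rbar u := real_inner_smul_right _ _ _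
    rw [h4] at h1
    nlinarith [h1, h3, ht]
  -- Step 2: a uniform margin δ on the compact set of bad directions
  have hδ : ∃ δ : ℝ, 0 < δ ∧ ∀ u : EuclideanSpace ℝ (Fin M), ‖u‖ = 1 →
      (∀ k, (inner ℝ (w k) u : ℝ) ≤ 0) → (inner ℝ rbar u : ℝ) ≤ -δ := by
    set K : Set (EuclideanSpace ℝ (Fin M)) :=
      {u | ‖u‖ = 1 ∧ ∀ k, (inner ℝ (w k) u : ℝ) ≤ 0} with hKdef
    by_cases hKe : K.Nonempty
    · have hKclosed : IsClosed K := by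
        have : K = {u : EuclideanSpace ℝ (Fin M) | ‖u‖ = 1} ∩
            ⋂ k, {u : EuclideanSpace ℝ (Fin M) | (inner ℝ (w k) u : ℝ) ≤ 0} := by
          ext u; simp [hKdef, Set.mem_iInter]
        rw [this]
        exact (isClosed_eq continuous_norm continuous_const).inter
          (isClosed_iInter fun k =>
            isClosed_le (continuous_const.inner continuous_id) continuous_const)
      have hKcomp : IsCompact K := by
        apply IsCompact.of_isClosed_subset (isCompact_sphere (0 : EuclideanSpace ℝ (Fin M)) 1)
          hKclosed
        intro u hu
        simp [mem_sphere_iff_norm, hu.1]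
      obtain ⟨u₀, hu₀K, hmax⟩ := hKcomp.exists_isMaxOn
        (f := fun u : EuclideanSpace ℝ (Fin M) => (inner ℝ rbar u : ℝ)) hKe
        ((continuous_const.inner continuous_id).continuousOn)
      have hu₀ne : u₀ ≠ 0 := by
        intro h
        have := hu₀K.1
        rw [h] at this; simp at this
      have hneg : (inner ℝ rbar u₀ : ℝ) < 0 := hstar u₀ hu₀ne hu₀K.2
      refine ⟨-(inner ℝ rbar u₀ : ℝ), by linarith, ?_⟩
      intro u hu1 hu2
      have : (inner ℝ rbar u : ℝ) ≤ inner ℝ rbar u₀ := hmax ⟨hu1, hu2⟩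
      linarith
    · refine ⟨1, one_pos, ?_⟩
      intro u hu1 hu2
      exact absurd ⟨hu1, hu2⟩ (fun h => hKe ⟨u, h⟩)
  obtain ⟨δ, hδpos, hδmar⟩ := hδ
  -- Step 3: every y close to rbar has the separation property, hence a positive representation
  have hrep : ∀ y : EuclideanSpace ℝ (Fin M), ‖y - rbar‖ < δ →
      ∃ z : Fin N → ℝ, (∀ k, 0 < z k) ∧ y = ∑ k, z k • w k := by
    intro y hy
    apply posRep hN hM c hc w y
    intro q hq hw
    have hqn : 0 < ‖q‖ := norm_pos_iff.mpr hq
    set u : EuclideanSpace ℝ (Fin M) := ‖q‖⁻¹ • q with hudef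
    have hun : ‖u‖ = 1 := by
      rw [hudef, norm_smul, Real.norm_eq_abs, abs_of_pos (inv_pos.mpr hqn),
        inv_mul_cancel₀ hqn.ne']
    have hwu : ∀ k, (inner ℝ (w k) u : ℝ) ≤ 0 := by
      intro k
      rw [hudef, real_inner_smul_right]
      exact mul_nonpos_of_nonneg_of_nonpos (inv_pos.mpr hqn).le (hw k)
    have h1 : (inner ℝ rbar u : ℝ) ≤ -δ := hδmar u hun hwu
    have h2 : (inner ℝ (y - rbar) u : ℝ) ≤ ‖y - rbar‖ := by
      calc (inner ℝ (y - rbar) u : ℝ) ≤ ‖y - rbar‖ * ‖u‖ := real_inner_le_norm _ _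
        _ = ‖y - rbar‖ := by rw [hun, mul_one]
    have h3 : (inner ℝ y u : ℝ) < 0 := by
      have := inner_sub_left (𝕜 := ℝ) y rbar u
      have h4 : (inner ℝ y u : ℝ) = inner ℝ rbar u + inner ℝ (y - rbar) u := by
        rw [inner_sub_left]; ring
      rw [h4]
      linarith
    have h5 : (inner ℝ y u : ℝ) = ‖q‖⁻¹ * inner ℝ y q := by
      rw [hudef, real_inner_smul_right]
    have h6 : (inner ℝ y q : ℝ) = ‖q‖ * inner ℝ y u := by
      rw [h5]; field_simp
    rw [h6]
    exact mul_neg_of_pos_of_neg hqn h3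
  -- Assemble the three conclusions
  set C : Set (EuclideanSpace ℝ (Fin M)) :=
    {y | ∃ z : Fin N → ℝ, (∀ k, 0 ≤ z k) ∧ y = ∑ k, z k • w k} with hCdef
  have hball : Metric.ball rbar δ ⊆ C := by
    intro y hy
    rw [Metric.mem_ball, dist_eq_norm] at hy
    obtain ⟨z, hz, hsum⟩ := hrep y hy
    exact ⟨z, fun k => (hz k).le, hsum⟩
  have hint : rbar ∈ interior C :=
    mem_interior.mpr ⟨Metric.ball rbar δ, hball, Metric.isOpen_ball, Metric.mem_ball_self hδpos⟩
  have hrbar : ∃ z : Fin N → ℝ, (∀ k, 0 < z k) ∧ rbar = ∑ k, z k • w k := by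
    apply hrep rbar
    simpa using hδpos
  refine ⟨hint, hrbar, ?_⟩
  have hCspan : C ⊆ (Submodule.span ℝ (Set.range w) : Set (EuclideanSpace ℝ (Fin M))) := by
    rintro x ⟨z, hz, rfl⟩
    exact Submodule.sum_mem _ fun k _ =>
      Submodule.smul_mem _ _ (Submodule.subset_span ⟨k, rfl⟩)
  exact Submodule.eq_top_of_nonempty_interior' _ ⟨rbar, interior_mono hCspan hint⟩
end
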